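/- arXiv:0812.4529 — 3 statements merged into one kernel-verified Lean document; each statement's English description precedes it below -/
import Mathlib

section
/- Let d* be a real number with |d*| < 1 and set ε = (1/2π) log((1+d*)/(1-d*)). Then the zeros of δ(s) = cos²(πs) + d*² sin²(πs) are exactly the points s = (1-2n)/2 ± iε for integers n, and at each such zero s_n^± one has δ'(s_n^±) = ±2πi d*. -/
open Complex

/-- The zeros of `δ(s) = cos²(πs) + d*² sin²(πs)` are exactly `s = (1-2n)/2 ± iε`, `n ∈ ℤ`,
where `ε = (1/2π) log((1+d*)/(1-d*))`, and at these zeros `δ'(s_n^±) = ± 2πi d*`. -/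
theorem stmt4 (d : ℝ) (hd : |d| < 1) (ε : ℝ)
    (hε : ε = (1 / (2 * Real.pi)) * Real.log ((1 + d) / (1 - d))) :
    (∀ s : ℂ,
        Complex.cos (Real.pi * s) ^ 2 + (d : ℂ) ^ 2 * Complex.sin (Real.pi * s) ^ 2 = 0 ↔
          ∃ n : ℤ, s = ((1 - 2 * (n : ℂ)) / 2 + Complex.I * (ε : ℂ)) ∨
            s = ((1 - 2 * (n : ℂ)) / 2 - Complex.I * (ε : ℂ))) ∧
      (∀ n : ℤ,
        deriv (fun s : ℂ =>
            Complex.cos (Real.pi * s) ^ 2 + (d : ℂ) ^ 2 * Complex.sin (Real.pi * s) ^ 2)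
          ((1 - 2 * (n : ℂ)) / 2 + Complex.I * (ε : ℂ)) = 2 * Real.pi * Complex.I * d ∧
        deriv (fun s : ℂ =>
            Complex.cos (Real.pi * s) ^ 2 + (d : ℂ) ^ 2 * Complex.sin (Real.pi * s) ^ 2)
          ((1 - 2 * (n : ℂ)) / 2 - Complex.I * (ε : ℂ)) = -(2 * Real.pi * Complex.I * d)) := by
  have hd1 : -1 < d := neg_lt_of_abs_lt hd
  have hd2 : d < 1 := lt_of_abs_lt hd
  have h1d : (0:ℝ) < 1 + d := by linarith
  have h2d : (0:ℝ) < 1 - d := by linarith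
  set t : ℝ := Real.pi * ε with ht
  have hπ : (Real.pi : ℝ) ≠ 0 := Real.pi_ne_zero
  -- real tanh fact
  have hexp : Real.exp (2 * t) = (1 + d) / (1 - d) := by
    have : 2 * t = Real.log ((1 + d) / (1 - d)) := by
      rw [ht, hε]; field_simp
    rw [this, Real.exp_log (div_pos h1d h2d)]
  have hSR : Real.sinh t = d * Real.cosh t := by
    have he : Real.exp t * Real.exp t = (1 + d) / (1 - d) := by
      rw [← Real.exp_add, ← two_mul, hexp]
    have hepos : 0 < Real.exp t := Real.exp_pos t
    rw [Real.sinh_eq, Real.cosh_eq, Real.exp_neg]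
    field_simp at he ⊢
    nlinarith [he]
  -- complex versions
  have hS : Complex.sinh (t : ℂ) = (d : ℂ) * Complex.cosh (t : ℂ) := by
    rw [← Complex.ofReal_sinh, ← Complex.ofReal_cosh, hSR]; push_cast; ring
  have hC1 : (1 - (d:ℂ)^2) * Complex.cosh (t : ℂ) ^ 2 = 1 := by
    have := Complex.cosh_sq_sub_sinh_sq (t : ℂ)
    linear_combination this + (Complex.sinh (t:ℂ) + (d:ℂ) * Complex.cosh (t:ℂ)) * hS
  have hCne : Complex.cosh (t : ℂ) ≠ 0 := by
    rw [← Complex.ofReal_cosh]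
    exact_mod_cast (Real.cosh_pos (x := t)).ne'
  have hπC : (Real.pi : ℂ) ≠ 0 := by exact_mod_cast hπ
  have htC : (t : ℂ) = (Real.pi : ℂ) * (ε : ℂ) := by push_cast [ht]; ring
  -- factorization
  have hfact : ∀ s : ℂ,
      Complex.cos ((Real.pi:ℂ) * s + (t:ℂ) * I) * Complex.cos ((Real.pi:ℂ) * s - (t:ℂ) * I)
        = Complex.cosh (t:ℂ) ^ 2 *
          (Complex.cos (Real.pi * s) ^ 2 + (d : ℂ) ^ 2 * Complex.sin (Real.pi * s) ^ 2) := by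
    intro s
    rw [Complex.cos_add, Complex.cos_sub, Complex.cos_mul_I, Complex.sin_mul_I, hS]
    linear_combination (-((Complex.sin ((Real.pi:ℂ)*s)) * (d:ℂ) * Complex.cosh (t:ℂ))^2) * Complex.I_sq
  constructor
  · intro s
    have key : Complex.cos (Real.pi * s) ^ 2 + (d : ℂ) ^ 2 * Complex.sin (Real.pi * s) ^ 2 = 0 ↔
        (Complex.cos ((Real.pi:ℂ) * s + (t:ℂ) * I) = 0 ∨
         Complex.cos ((Real.pi:ℂ) * s - (t:ℂ) * I) = 0) := by
      rw [← mul_eq_zero, hfact s, mul_eq_zero, or_iff_right]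
      exact pow_ne_zero 2 hCne
    rw [key, Complex.cos_eq_zero_iff, Complex.cos_eq_zero_iff]
    constructor
    · rintro (⟨k, hk⟩ | ⟨k, hk⟩)
      · refine ⟨-k, Or.inr ?_⟩
        apply mul_left_cancel₀ hπC
        push_cast
        rw [htC] at hk
        linear_combination hk
      · refine ⟨-k, Or.inl ?_⟩
        apply mul_left_cancel₀ hπC
        push_cast
        rw [htC] at hk
        linear_combination hk
    · rintro ⟨n, h | h⟩
      · refine Or.inr ⟨-n, ?_⟩
        rw [h, htC]; push_cast; ring
      · refine Or.inl ⟨-n, ?_⟩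
        rw [h, htC]; push_cast; ring
  · intro n
    -- derivative formula
    have hD : ∀ s : ℂ,
        deriv (fun s : ℂ =>
            Complex.cos (Real.pi * s) ^ 2 + (d : ℂ) ^ 2 * Complex.sin (Real.pi * s) ^ 2) s
          = 2 * (Real.pi:ℂ) * ((d:ℂ)^2 - 1) * Complex.sin ((Real.pi:ℂ)*s) * Complex.cos ((Real.pi:ℂ)*s) := by
      intro s
      have h1 : HasDerivAt (fun z : ℂ => (Real.pi:ℂ) * z) ((Real.pi:ℂ)) s := by
        simpa using (hasDerivAt_id s).const_mul ((Real.pi:ℂ))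
      have h2 := ((h1.ccos.pow 2).add ((h1.csin.pow 2).const_mul ((d:ℂ)^2)))
      have h3 : HasDerivAt (fun s : ℂ =>
            Complex.cos (Real.pi * s) ^ 2 + (d : ℂ) ^ 2 * Complex.sin (Real.pi * s) ^ 2)
          (2 * (Real.pi:ℂ) * ((d:ℂ)^2 - 1) * Complex.sin ((Real.pi:ℂ)*s) * Complex.cos ((Real.pi:ℂ)*s)) s := by
        refine HasDerivAt.congr_deriv h2 ?_
        push_cast
        ring
      exact h3.deriv
    -- cos and sin at the half-integer
    set x : ℂ := (Real.pi:ℂ) * ((1 - 2 * (n : ℂ)) / 2) with hx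
    have hcosx : Complex.cos x = 0 := by
      rw [Complex.cos_eq_zero_iff]
      exact ⟨-n, by rw [hx]; push_cast; ring⟩
    have hsinx : Complex.sin x ^ 2 = 1 := by
      have := Complex.sin_sq_add_cos_sq x
      rw [hcosx] at this
      linear_combination this
    have hprod : ∀ y : ℂ, Complex.sin (x + y * I) * Complex.cos (x + y * I)
        = -(Complex.cosh y * Complex.sinh y) * I := by
      intro y
      rw [Complex.sin_add, Complex.cos_add, Complex.cos_mul_I, Complex.sin_mul_I, hcosx]
      linear_combination (-(Complex.cosh y * Complex.sinh y * Complex.I)) * hsinx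
    constructor
    · rw [hD]
      have harg : (Real.pi:ℂ) * ((1 - 2 * (n : ℂ)) / 2 + Complex.I * (ε : ℂ)) = x + (t:ℂ) * I := by
        rw [hx, htC]; ring
      rw [harg]
      have := hprod (t:ℂ)
      linear_combination 2 * (Real.pi:ℂ) * ((d:ℂ)^2 - 1) * this
        - 2 * (Real.pi:ℂ) * Complex.I * (d:ℂ) * hC1
        + 2 * (Real.pi:ℂ) * ((d:ℂ)^2 - 1) * Complex.I * Complex.cosh (t:ℂ) * hS
        + 4 * (Real.pi:ℂ) * Complex.I * Complex.cosh (t:ℂ) * (1 - (d:ℂ)^2) * hS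
        + 4 * (Real.pi:ℂ) * (d:ℂ) * Complex.I * hC1
    · rw [hD]
      have harg : (Real.pi:ℂ) * ((1 - 2 * (n : ℂ)) / 2 - Complex.I * (ε : ℂ)) = x + (-(t:ℂ)) * I := by
        rw [hx, htC]; ring
      rw [harg]
      have h4 := hprod (-(t:ℂ))
      rw [Complex.cosh_neg, Complex.sinh_neg] at h4
      linear_combination 2 * (Real.pi:ℂ) * ((d:ℂ)^2 - 1) * h4
        + 2 * (Real.pi:ℂ) * Complex.I * (d:ℂ) * hC1
        - 2 * (Real.pi:ℂ) * ((d:ℂ)^2 - 1) * Complex.I * Complex.cosh (t:ℂ) * hS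
        - 4 * (Real.pi:ℂ) * Complex.I * Complex.cosh (t:ℂ) * (1 - (d:ℂ)^2) * hS
        - 4 * (Real.pi:ℂ) * (d:ℂ) * Complex.I * hC1
end

section
/- Let μ₊, μ₋ > 0 and ν₊, ν₋ ∈ (0, 1/2). With b = (1-ν₊)/μ₊ + (1-ν₋)/μ₋, e = ν₊/μ₊ + ν₋/μ₋, d* = ((1-2ν₊)/(2μ₊) - (1-2ν₋)/(2μ₋))/b, d₀ = (1-d*²)^{1/4}, and ν defined by 1-ν = ((1-ν₊)/μ₊ + (1-ν₋)/μ₋)/((1/μ₊ + 1/μ₋) cosh²(πε)) with ε = (1/π) artanh(d*), one has 1 - ν = b d₀⁴/(b+e). Moreover 0 < ν < 1/2, and if μ₊ = μ₋ = μ and ν₊ = ν₋ = ν₀ then ν = ν₀. -/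

private lemma auxQ (X Y b : ℝ) (hX : 0 < X) (hY : 0 < Y) (hXYb : X + Y < b) :
    (X - Y) ^ 2 < b * (X + Y) := by nlinarith [mul_pos hX hY]

private lemma auxd2 (dstar b X Y : ℝ) (hb : 0 < b) (hX : 0 < X) (hY : 0 < Y)
    (hXYb : X + Y < b) (hdsq : dstar ^ 2 * b ^ 2 = (X - Y) ^ 2) : dstar ^ 2 < 1 := by
  nlinarith [auxQ X Y b hX hY hXYb, mul_pos hb hb,
    mul_lt_mul_of_pos_left hXYb hb]

private lemma auxup (b e dstar : ℝ) (hb : 0 < b) (he : 0 < e) :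
    b * (1 - dstar ^ 2) < b + e := by
  nlinarith [mul_nonneg hb.le (sq_nonneg dstar)]

private lemma auxmain (b e dstar X Y : ℝ) (hb : 0 < b) (hX : 0 < X) (hY : 0 < Y)
    (hXYb : X + Y < b) (hbme : b - e = 2 * X + 2 * Y)
    (hdsq : dstar ^ 2 * b ^ 2 = (X - Y) ^ 2) : b + e < 2 * (b * (1 - dstar ^ 2)) := by
  nlinarith [auxQ X Y b hX hY hXYb, mul_pos hb hb]

set_option maxHeartbeats 1600000 in
/-- The Lazarus–Leblond equivalent Poisson ratio `ν`, defined by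
`1-ν = ((1-ν₊)/μ₊ + (1-ν₋)/μ₋)/((1/μ₊+1/μ₋) cosh²(πε))`, satisfies `1-ν = b d₀⁴/(b+e)`,
`0 < ν < 1/2`, and reduces to the common Poisson ratio for a homogeneous body. -/
theorem stmt8 (μp μm νp νm b e dstar d₀ ε ν : ℝ)
    (hμp : 0 < μp) (hμm : 0 < μm)
    (hνp₁ : 0 < νp) (hνp₂ : νp < 1 / 2) (hνm₁ : 0 < νm) (hνm₂ : νm < 1 / 2)
    (hb : b = (1 - νp) / μp + (1 - νm) / μm)
    (he : e = νp / μp + νm / μm)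
    (hdstar : dstar = ((1 - 2 * νp) / (2 * μp) - (1 - 2 * νm) / (2 * μm)) / b)
    (hd₀ : d₀ = (1 - dstar ^ 2) ^ ((1 : ℝ) / 4))
    (hε : ε = (1 / (2 * Real.pi)) * Real.log ((1 + dstar) / (1 - dstar)))
    (hν : 1 - ν = ((1 - νp) / μp + (1 - νm) / μm) /
      ((1 / μp + 1 / μm) * Real.cosh (Real.pi * ε) ^ 2)) :
    1 - ν = b * d₀ ^ 4 / (b + e) ∧ 0 < ν ∧ ν < 1 / 2 ∧
      ((μp = μm ∧ νp = νm) → ν = νp) := by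
  have hπ : (0:ℝ) < Real.pi := Real.pi_pos
  set X := (1 - 2 * νp) / (2 * μp) with hX
  set Y := (1 - 2 * νm) / (2 * μm) with hY
  have hXpos : 0 < X := div_pos (by linarith) (by positivity)
  have hYpos : 0 < Y := div_pos (by linarith) (by positivity)
  have hbXY : b = X + Y + 1 / (2 * μp) + 1 / (2 * μm) := by
    rw [hb, hX, hY]; field_simp; ring
  have hbpos : 0 < b := by
    rw [hbXY]; positivity
  have hepos : 0 < e := by
    rw [he]; positivity
  have hXYb : X + Y < b := by
    rw [hbXY]
    have : 0 < 1 / (2 * μp) := by positivity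
    have : 0 < 1 / (2 * μm) := by positivity
    linarith
  have hdb : dstar * b = X - Y := by
    rw [hdstar]; field_simp
  clear_value X Y
  have hdsq : dstar ^ 2 * b ^ 2 = (X - Y) ^ 2 := by
    linear_combination (dstar * b + X - Y) * hdb
  have hd2 : dstar ^ 2 < 1 := auxd2 dstar b X Y hbpos hXpos hYpos hXYb hdsq
  have h1d : 0 < 1 - dstar ^ 2 := by linarith
  have hdlt : dstar < 1 := by linarith [sq_nonneg (dstar - 1)]
  have hdgt : -1 < dstar := by linarith [sq_nonneg (dstar + 1)]
  have h1dp : (0:ℝ) < 1 + dstar := by linarith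
  have h1dm : (0:ℝ) < 1 - dstar := by linarith
  have hrpos : 0 < (1 + dstar) / (1 - dstar) := div_pos h1dp h1dm
  have hεπ : 2 * (Real.pi * ε) = Real.log ((1 + dstar) / (1 - dstar)) := by
    rw [hε]; field_simp
  have hcoshlog : Real.cosh (Real.log ((1 + dstar) / (1 - dstar)))
      = ((1 + dstar) / (1 - dstar) + (1 - dstar) / (1 + dstar)) / 2 := by
    rw [Real.cosh_eq, Real.exp_neg, Real.exp_log hrpos, inv_div]
  have hA : (1 + dstar) / (1 - dstar) * (1 - dstar) = 1 + dstar :=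
    div_mul_cancel₀ _ (ne_of_gt h1dm)
  have hB : (1 - dstar) / (1 + dstar) * (1 + dstar) = 1 - dstar :=
    div_mul_cancel₀ _ (ne_of_gt h1dp)
  have hcosh2 : Real.cosh (Real.pi * ε) ^ 2 = 1 / (1 - dstar ^ 2) := by
    have h2m := Real.cosh_two_mul (Real.pi * ε)
    rw [hεπ, hcoshlog, Real.sinh_sq] at h2m
    have hgoal : Real.cosh (Real.pi * ε) ^ 2
        = (((1 + dstar) / (1 - dstar) + (1 - dstar) / (1 + dstar)) / 2 + 1) / 2 := by
      linarith
    rw [hgoal, eq_div_iff (ne_of_gt h1d)]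
    linear_combination ((1 + dstar) / 4) * hA + ((1 - dstar) / 4) * hB
  have hbe : b + e = 1 / μp + 1 / μm := by
    rw [hb, he]; field_simp; ring
  have hbepos : 0 < b + e := by linarith
  have hd04 : d₀ ^ 4 = 1 - dstar ^ 2 := by
    rw [hd₀, ← Real.rpow_natCast ((1 - dstar ^ 2) ^ ((1:ℝ)/4)) 4,
      ← Real.rpow_mul h1d.le]
    norm_num
  have key : 1 - ν = b * (1 - dstar ^ 2) / (b + e) := by
    rw [hν, hcosh2, ← hb, ← hbe]
    rw [div_eq_div_iff (by positivity) (by positivity)]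
    field_simp
  have hbme : b - e = 2 * X + 2 * Y := by
    rw [hb, he, hX, hY]; field_simp; ring
  refine ⟨by rw [hd04]; exact key, ?_, ?_, ?_⟩
  · -- 0 < ν : b(1-d²) < b+e
    have : b * (1 - dstar ^ 2) < b + e := auxup b e dstar hbpos hepos
    have h1 : b * (1 - dstar ^ 2) / (b + e) < 1 := (div_lt_one hbepos).2 this
    linarith [key, h1]
  · -- ν < 1/2 : b+e < 2 b (1-d²)
    have hmain : b + e < 2 * (b * (1 - dstar ^ 2)) :=
      auxmain b e dstar X Y hbpos hXpos hYpos hXYb hbme hdsq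
    have h2 : 1 / 2 < b * (1 - dstar ^ 2) / (b + e) := by
      rw [lt_div_iff₀ hbepos]; linarith
    linarith [key, h2]
  · rintro ⟨h1, h2⟩
    have hXY : X = Y := by rw [hX, hY, h1, h2]
    have hd0 : dstar = 0 := by
      rw [hdstar, hXY, sub_self, zero_div]
    have hb' : b = 2 * (1 - νm) / μm := by rw [hb, h1, h2]; ring
    have he' : e = 2 * νm / μm := by rw [he, h1, h2]; ring
    have : 1 - ν = 1 - νm := by
      rw [key, hd0, hb', he']
      field_simp
      ring
    rw [h2]; linarith
end

section
/- Let G(β) = [[1, -i·sign(β)·d*], [i·sign(β)·d*, 1]] for real β ≠ 0 and |d*| < 1. Define X⁺(β) = d₀·R(B⁺(β)) for Im β ≥ 0 and X⁻(β) = d₀⁻¹·R(B⁻(β)) for Im β ≤ 0, where R(θ) is the 2×2 rotation matrix [[cos θ, -sin θ],[sin θ, cos θ]], B±(β) = -ε log(∓iβ) (principal branch), d₀ = (1-d*²)^{1/4}, ε = (1/π) artanh(d*). Then for all real β ≠ 0, (1/|β|) G(β) = (1/(β₊^{1/2} β₋^{1/2})) X⁺(β) [X⁻(β)]⁻¹,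 where β₊^{1/2}, β₋^{1/2} denote the boundary values of the branch of the square root analytic in the upper/lower half-plane respectively (β₊^{1/2} = β^{1/2} for β>0, = i(-β)^{1/2} for β<0; β₋^{1/2} = β^{1/2} for β>0, = -i(-β)^{1/2} for β<0). -/
open Complex Matrix

/-- The rotation matrix `R(θ)`. -/
noncomputable def rotM (θ : ℂ) : Matrix (Fin 2) (Fin 2) ℂ :=
  !![Complex.cos θ, -Complex.sin θ; Complex.sin θ, Complex.cos θ]

/-- Boundary value on `ℝ` of the branch of `√β` analytic in the upper half-plane. -/
noncomputable def sqrtUp (β : ℝ) : ℂ :=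
  if 0 < β then (Real.sqrt β : ℂ) else Complex.I * (Real.sqrt (-β) : ℂ)

/-- Boundary value on `ℝ` of the branch of `√β` analytic in the lower half-plane. -/
noncomputable def sqrtLow (β : ℝ) : ℂ :=
  if 0 < β then (Real.sqrt β : ℂ) else -Complex.I * (Real.sqrt (-β) : ℂ)

lemma rotM_mul (a b : ℂ) : rotM a * rotM b = rotM (a + b) := by
  simp only [rotM, Matrix.mul_fin_two, Complex.cos_add, Complex.sin_add]
  congr 1 <;> ring

lemma rotM_zero : rotM 0 = 1 := by
  simp [rotM, Matrix.one_fin_two]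

lemma coshsinh (d d₀ : ℝ) (hd : |d| < 1)
    (hd₀ : d₀ = (1 - d ^ 2) ^ ((1 : ℝ) / 4)) :
    d₀ ^ 2 * Real.cosh ((1/2) * Real.log ((1 + d) / (1 - d))) = 1 ∧
    d₀ ^ 2 * Real.sinh ((1/2) * Real.log ((1 + d) / (1 - d))) = d := by
  have h1 : 0 < 1 - d := by cases abs_lt.mp hd; linarith
  have h2 : 0 < 1 + d := by cases abs_lt.mp hd; linarith
  have hsq : (0:ℝ) < 1 - d ^ 2 := by nlinarith
  set S := Real.sqrt (1 - d ^ 2) with hS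
  have hS0 : 0 < S := Real.sqrt_pos.mpr hsq
  have hS2 : S ^ 2 = 1 - d ^ 2 := Real.sq_sqrt hsq.le
  have hd₀2 : d₀ ^ 2 = S := by
    rw [hd₀, hS, ← Real.rpow_natCast ((1 - d^2) ^ ((1:ℝ)/4)) 2,
      ← Real.rpow_mul hsq.le]
    norm_num
    rw [Real.sqrt_eq_rpow]
  set t := (1/2) * Real.log ((1 + d) / (1 - d)) with ht
  have hu : 0 < (1 + d) / (1 - d) := div_pos h2 h1
  have hE2 : Real.exp t ^ 2 = (1 + d) / (1 - d) := by
    rw [← Real.exp_nat_mul]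
    norm_num [ht]
    have : 2 * (1 / 2 * Real.log ((1 + d) / (1 - d))) = Real.log ((1 + d) / (1 - d)) := by ring
    rw [this, Real.exp_log hu]
  have hE : Real.exp t = S / (1 - d) := by
    have h' : (S / (1 - d)) ^ 2 = (1 + d) / (1 - d) := by
      rw [div_pow, hS2]; field_simp; ring
    nlinarith [Real.exp_pos t, div_pos hS0 h1]
  constructor
  · rw [Real.cosh_eq, Real.exp_neg, hE, hd₀2]
    field_simp
    nlinarith
  · rw [Real.sinh_eq, Real.exp_neg, hE, hd₀2]
    field_simp
    nlinarith
lemma rotM_I (x : ℂ) : rotM (x * Complex.I)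
    = !![Complex.cosh x, -(Complex.sinh x * Complex.I);
         Complex.sinh x * Complex.I, Complex.cosh x] := by
  rw [rotM, Complex.cos_mul_I, Complex.sin_mul_I]

/-- The Wiener–Hopf factorization `(1/|β|) G(β) = (1/(β₊^{1/2} β₋^{1/2})) X⁺(β) [X⁻(β)]⁻¹`
holds pointwise for all real `β ≠ 0`, where `X±(β) = d₀^{±1} R(B±(β))`,
`B±(β) = -ε log(∓iβ)` (principal branch), `d₀ = (1-d*²)^{1/4}`, `ε = (1/π) artanh d*`. -/
theorem stmt9 (d ε d₀ : ℝ) (hd : |d| < 1)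
    (hε : ε = (1 / (2 * Real.pi)) * Real.log ((1 + d) / (1 - d)))
    (hd₀ : d₀ = (1 - d ^ 2) ^ ((1 : ℝ) / 4)) :
    ∀ β : ℝ, β ≠ 0 →
      ((|β|⁻¹ : ℝ) : ℂ) •
          (!![1, -Complex.I * (Real.sign β : ℂ) * (d : ℂ);
              Complex.I * (Real.sign β : ℂ) * (d : ℂ), 1] : Matrix (Fin 2) (Fin 2) ℂ) =
        (sqrtUp β * sqrtLow β)⁻¹ •
          (((d₀ : ℂ) • rotM (-(ε : ℂ) * Complex.log (-Complex.I * (β : ℂ)))) *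
            (((d₀ : ℂ)⁻¹ • rotM (-(ε : ℂ) * Complex.log (Complex.I * (β : ℂ))))⁻¹)) := by
  have h1 : 0 < 1 - d := by cases abs_lt.mp hd; linarith
  have h2 : 0 < 1 + d := by cases abs_lt.mp hd; linarith
  have hsq : (0:ℝ) < 1 - d ^ 2 := by nlinarith
  have hd₀pos : (0:ℝ) < d₀ := by rw [hd₀]; positivity
  have hd₀ne : (d₀ : ℂ) ≠ 0 := by exact_mod_cast ne_of_gt hd₀pos
  obtain ⟨hc, hs⟩ := coshsinh d d₀ hd hd₀
  have hεπ : (ε * Real.pi) = 1/2 * Real.log ((1+d)/(1-d)) := by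
    rw [hε]; field_simp [Real.pi_ne_zero]; try ring
  have hcC : (d₀:ℂ)^2 * Complex.cosh ((ε : ℂ) * (Real.pi : ℂ)) = 1 := by
    rw [show (ε : ℂ) * (Real.pi : ℂ) = ((ε * Real.pi : ℝ) : ℂ) by try (push_cast; try ring),
      ← Complex.ofReal_cosh, hεπ]
    exact_mod_cast hc
  have hsC : (d₀:ℂ)^2 * Complex.sinh ((ε : ℂ) * (Real.pi : ℂ)) = (d : ℂ) := by
    rw [show (ε : ℂ) * (Real.pi : ℂ) = ((ε * Real.pi : ℝ) : ℂ) by try (push_cast; try ring),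
      ← Complex.ofReal_sinh, hεπ]
    exact_mod_cast hs
  intro β hβ
  have hinv : (((d₀ : ℂ)⁻¹ • rotM (-(ε:ℂ) * Complex.log (Complex.I * β)))⁻¹ :
      Matrix (Fin 2) (Fin 2) ℂ)
      = (d₀:ℂ) • rotM (-(-(ε:ℂ) * Complex.log (Complex.I * β))) := by
    apply Matrix.inv_eq_right_inv
    rw [Matrix.smul_mul, Matrix.mul_smul, rotM_mul, add_neg_cancel, rotM_zero, smul_smul,
      inv_mul_cancel₀ hd₀ne, one_smul]
  rw [hinv, Matrix.smul_mul, Matrix.mul_smul, rotM_mul, smul_smul, smul_smul]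
  rcases hβ.lt_or_gt with hb | hb
  · -- β < 0
    have hmb : (0:ℝ) < -β := by linarith
    have hlog1 : Complex.log (-Complex.I * β) = (Real.log (-β) : ℂ) + (Real.pi/2)*Complex.I := by
      have e : -Complex.I * (β:ℂ) = ((-β : ℝ):ℂ) * Complex.I := by try (push_cast; try ring)
      rw [e, Complex.log_ofReal_mul hmb Complex.I_ne_zero, Complex.log_I]
      try (push_cast; try ring)
    have hlog2 : Complex.log (Complex.I * β) = (Real.log (-β) : ℂ) - (Real.pi/2)*Complex.I := by
      have e : Complex.I * (β:ℂ) = ((-β : ℝ):ℂ) * (-Complex.I) := by try (push_cast; try ring)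
      rw [e, Complex.log_ofReal_mul hmb (by simpa using Complex.I_ne_zero), Complex.log_neg_I]
      try (push_cast; try ring)
    have hang : -(ε:ℂ) * Complex.log (-Complex.I * β) + -(-(ε:ℂ) * Complex.log (Complex.I * β))
        = (-((ε:ℂ) * (Real.pi:ℂ))) * Complex.I := by
      rw [hlog1, hlog2]; ring
    have hsqrt : sqrtUp β * sqrtLow β = ((|β| : ℝ) : ℂ) := by
      simp only [sqrtUp, sqrtLow, if_neg (not_lt.mpr hb.le), abs_of_neg hb]
      have e : Complex.I * (↑(Real.sqrt (-β))) * (-Complex.I * ↑(Real.sqrt (-β)))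
          = -(Complex.I*Complex.I) * ((Real.sqrt (-β) : ℂ))^2 := by ring
      rw [e, Complex.I_mul_I, ← Complex.ofReal_pow, Real.sq_sqrt hmb.le]
      push_cast
      ring
    rw [hang, hsqrt, Real.sign_of_neg hb, rotM_I, Complex.cosh_neg, Complex.sinh_neg]
    have hβne : ((|β| : ℝ) : ℂ) ≠ 0 := by
      simp [abs_ne_zero, hβ]
    ext i j
    fin_cases i <;> fin_cases j <;>
      simp [Matrix.smul_apply]
    · linear_combination -(((|β| : ℝ) : ℂ))⁻¹ * hcC
    · linear_combination -(((|β| : ℝ) : ℂ))⁻¹ * Complex.I * hsC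
    · linear_combination -(((|β| : ℝ) : ℂ))⁻¹ * Complex.I * hsC
    · linear_combination -(((|β| : ℝ) : ℂ))⁻¹ * hcC
  · -- β > 0
    have hlog1 : Complex.log (-Complex.I * β) = (Real.log β : ℂ) - (Real.pi/2)*Complex.I := by
      have e : -Complex.I * (β:ℂ) = ((β : ℝ):ℂ) * (-Complex.I) := by try (push_cast; try ring)
      rw [e, Complex.log_ofReal_mul hb (by simpa using Complex.I_ne_zero), Complex.log_neg_I]
      try (push_cast; try ring)
    have hlog2 : Complex.log (Complex.I * β) = (Real.log β : ℂ) + (Real.pi/2)*Complex.I := by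
      have e : Complex.I * (β:ℂ) = ((β : ℝ):ℂ) * Complex.I := by try (push_cast; try ring)
      rw [e, Complex.log_ofReal_mul hb Complex.I_ne_zero, Complex.log_I]
      try (push_cast; try ring)
    have hang : -(ε:ℂ) * Complex.log (-Complex.I * β) + -(-(ε:ℂ) * Complex.log (Complex.I * β))
        = ((ε:ℂ) * (Real.pi:ℂ)) * Complex.I := by
      rw [hlog1, hlog2]; ring
    have hsqrt : sqrtUp β * sqrtLow β = ((|β| : ℝ) : ℂ) := by
      simp only [sqrtUp, sqrtLow, if_pos hb, abs_of_pos hb]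
      rw [← Complex.ofReal_mul, Real.mul_self_sqrt hb.le]
    rw [hang, hsqrt, Real.sign_of_pos hb, rotM_I]
    ext i j
    fin_cases i <;> fin_cases j <;>
      simp [Matrix.smul_apply]
    · linear_combination -(((|β| : ℝ) : ℂ))⁻¹ * hcC
    · linear_combination -(((|β| : ℝ) : ℂ))⁻¹ * Complex.I * hsC
    · linear_combination -(((|β| : ℝ) : ℂ))⁻¹ * Complex.I * hsC
    · linear_combination -(((|β| : ℝ) : ℂ))⁻¹ * hcC
end
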